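/- arXiv:1608.02090 — 10 statements merged into one kernel-verified Lean document; each statement's English description precedes it below -/
import Mathlib

section
/- Let P : Sⁿ → Sⁿ be the orthogonal projection (with respect to the trace inner product) onto a subspace S of real symmetric n×n matrices. If P maps the affine set Y + L into itself and the affine set C + L^⊥ into itself (L a linear subspace), then for any X ∈ Y + L, ⟨C, X⟩ = ⟨C, P(X)⟩. -/
open Matrix

/-- If the orthogonal projection `P` onto a subspace `S` of real symmetric matrices (with
respect to the trace inner product) maps `Y + L` into itself and `C + L^⊥` into itself,
then `⟨C, X⟩ = ⟨C, P X⟩` for every `X ∈ Y + L`. -/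
theorem stmt0 {n : ℕ}
    (L S Lp : Submodule ℝ (Matrix (Fin n) (Fin n) ℝ))
    (hLsym : ∀ A ∈ L, A.IsSymm) (hSsym : ∀ A ∈ S, A.IsSymm)
    (Y C : Matrix (Fin n) (Fin n) ℝ) (hY : Y.IsSymm) (hC : C.IsSymm)
    (hLp : ∀ A, A ∈ Lp ↔ (A.IsSymm ∧ ∀ B ∈ L, (A * B).trace = 0))
    (P : Matrix (Fin n) (Fin n) ℝ →ₗ[ℝ] Matrix (Fin n) (Fin n) ℝ)
    (hsa : ∀ A B, (P A * B).trace = (A * P B).trace)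
    (hidem : ∀ A, P (P A) = P A)
    (hrange : LinearMap.range P = S)
    (hprim : ∀ X, X - Y ∈ L → P X - Y ∈ L)
    (hdual : ∀ Z, Z - C ∈ Lp → P Z - C ∈ Lp) :
    ∀ X, X - Y ∈ L → (C * X).trace = (C * P X).trace := by
  intro X hX
  -- B = X - P X ∈ L
  have hB : X - P X ∈ L := by
    have := L.sub_mem hX (hprim X hX)
    simpa using this
  -- P C - C ∈ Lp
  have h0 : (0 : Matrix (Fin n) (Fin n) ℝ) ∈ Lp := by
    rw [hLp]
    exact ⟨Matrix.isSymm_zero, fun B _ => by simp⟩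
  have hPC : P C - C ∈ Lp := hdual C (by simpa using h0)
  -- so (P C - C) ⟂ L
  have horth : ((P C - C) * (X - P X)).trace = 0 :=
    ((hLp _).1 hPC).2 _ hB
  -- tr(P C * (X - P X)) = tr(C * P(X - P X)) = 0
  have hPB : P (X - P X) = 0 := by
    rw [map_sub, hidem, sub_self]
  have h1 : (P C * (X - P X)).trace = 0 := by
    rw [hsa, hPB, mul_zero, trace_zero]
  have h2 : (C * (X - P X)).trace = 0 := by
    have : ((P C - C) * (X - P X)).trace
        = (P C * (X - P X)).trace - (C * (X - P X)).trace := by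
      rw [sub_mul, trace_sub]
    rw [this, h1] at horth
    linarith
  have : (C * X).trace - (C * P X).trace = 0 := by
    rw [← trace_sub, ← mul_sub]; exact h2
  linarith
end

section
/- Let P_L and P_S be the orthogonal projections of an inner product space V onto subspaces L and S respectively. Then L is an invariant subspace of P_S if and only if S is an invariant subspace of P_L. -/
open RealInnerProductSpace

lemma aux_inv {V : Type*} [NormedAddCommGroup V] [InnerProductSpace ℝ V]
    [FiniteDimensional ℝ V] (L S : Submodule ℝ V)
    (h : ∀ x ∈ L, (Submodule.orthogonalProjection S x : V) ∈ L) :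
    ∀ x ∈ S, (Submodule.orthogonalProjection L x : V) ∈ S := by
  intro x hx
  set y : V := (Submodule.orthogonalProjection L x : V) with hy
  set z : V := (Submodule.orthogonalProjection S y : V) with hz
  have hyL : y ∈ L := (Submodule.orthogonalProjection L x).2
  have hzS : z ∈ S := (Submodule.orthogonalProjection S y).2
  have hzL : z ∈ L := h y hyL
  have hmemL : y - z ∈ L := L.sub_mem hyL hzL
  have hperp : y - z ∈ Sᗮ := Submodule.sub_starProjection_mem_orthogonal (K := S) y
  have key : ⟪y - z, y - z⟫ = 0 := by
    have h2 : ⟪y - z, z⟫ = 0 := by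
      rw [real_inner_comm]
      exact hperp z hzS
    have h3 : ⟪y - z, y⟫ = ⟪y - z, x⟫ := by
      have hfix : (Submodule.orthogonalProjection L (y - z) : V) = y - z :=
        Submodule.starProjection_eq_self_iff.2 hmemL
      calc ⟪y - z, y⟫ = ⟪y - z, (Submodule.orthogonalProjection L x : V)⟫ := by rw [hy]
        _ = ⟪(Submodule.orthogonalProjection L (y - z) : V), x⟫ :=
            (Submodule.inner_starProjection_left_eq_right L (y - z) x).symm
        _ = ⟪y - z, x⟫ := by rw [hfix]
    have h4 : ⟪y - z, x⟫ = 0 := by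
      rw [real_inner_comm]; exact hperp x hx
    rw [inner_sub_right, h2, h3, h4, sub_zero]
  have : y - z = 0 := inner_self_eq_zero.mp key
  have : y = z := sub_eq_zero.mp this
  rw [this]; exact hzS

/-- `L` is an invariant subspace of the orthogonal projection onto `S` iff `S` is an
invariant subspace of the orthogonal projection onto `L`. -/
theorem stmt2 {V : Type*} [NormedAddCommGroup V] [InnerProductSpace ℝ V]
    [FiniteDimensional ℝ V] (L S : Submodule ℝ V) :
    (∀ x ∈ L, (Submodule.orthogonalProjection S x : V) ∈ L) ↔
      (∀ x ∈ S, (Submodule.orthogonalProjection L x : V) ∈ S) := by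
  exact ⟨aux_inv L S, aux_inv S L⟩
end

section
/- Let S ⊆ Sⁿ be a linear subspace invariant under squaring (X ∈ S implies X² ∈ S). Then the orthogonal projection P_S onto S (with respect to the trace inner product) is a positive map: if X is positive semidefinite, then P_S(X) is positive semidefinite. -/
open Matrix

open Polynomial in
private lemma aux_aeval_diagonal {n : ℕ} (d : Fin n → ℝ) (p : ℝ[X]) :
    aeval (diagonal d) p = diagonal (fun i => p.eval (d i)) := by
  have h1 : aeval ((diagonalAlgHom (α := ℝ) (n := Fin n) ℝ) d) p
      = (diagonalAlgHom (α := ℝ) (n := Fin n) ℝ) (aeval d p) :=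
    aeval_algHom_apply _ d p
  simp only [diagonalAlgHom_apply] at h1
  have h2 : (aeval d) p = fun i => p.eval (d i) := by
    funext i
    rw [aeval_fn_apply]
    simp [coe_aeval_eq_eval]
  rw [h1, h2]

private lemma aux_trace_nonneg {n : ℕ} {M : Matrix (Fin n) (Fin n) ℝ} (hM : M.PosSemidef) :
    0 ≤ M.trace := by
  rw [Matrix.trace]
  apply Finset.sum_nonneg
  intro i _
  exact hM.diag_nonneg

open Polynomial in
/-- If a subspace `S` of real symmetric matrices is invariant under squaring, then the
orthogonal projection onto `S` (w.r.t. the trace inner product) is a positive map. -/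
theorem stmt5 {n : ℕ} (S : Submodule ℝ (Matrix (Fin n) (Fin n) ℝ))
    (hSsym : ∀ A ∈ S, A.IsSymm)
    (hsq : ∀ X ∈ S, X * X ∈ S)
    (P : Matrix (Fin n) (Fin n) ℝ →ₗ[ℝ] Matrix (Fin n) (Fin n) ℝ)
    (hsa : ∀ A B, (P A * B).trace = (A * P B).trace)
    (hidem : ∀ A, P (P A) = P A)
    (hrange : LinearMap.range P = S) :
    ∀ X : Matrix (Fin n) (Fin n) ℝ, X.PosSemidef → (P X).PosSemidef := by
  intro X hX
  set Y := P X with hYdef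
  have hYS : Y ∈ S := hrange ▸ LinearMap.mem_range_self P X
  -- P fixes S pointwise
  have hPfix : ∀ A ∈ S, P A = A := by
    intro A hA
    rw [← hrange] at hA
    obtain ⟨B, rfl⟩ := hA
    exact hidem B
  -- S closed under Jordan products
  have hjordan : ∀ A ∈ S, ∀ B ∈ S, A * B + B * A ∈ S := by
    intro A hA B hB
    have h1 := hsq (A + B) (S.add_mem hA hB)
    have h2 : A * B + B * A = (A + B) * (A + B) - A * A - B * B := by
      noncomm_ring
    rw [h2]
    exact S.sub_mem (S.sub_mem h1 (hsq A hA)) (hsq B hB)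
  -- S closed under positive powers
  have hpow : ∀ A ∈ S, ∀ k : ℕ, A ^ (k + 1) ∈ S := by
    intro A hA k
    induction k with
    | zero => simpa using hA
    | succ k ih =>
      have h2 : A ^ (k + 1) * A + A * A ^ (k + 1) ∈ S := hjordan _ ih _ hA
      have e1 : A ^ (k + 1) * A = A ^ (k + 2) := (pow_succ A (k + 1)).symm
      have e2 : A * A ^ (k + 1) = A ^ (k + 2) := (pow_succ' A (k + 1)).symm
      rw [e1, e2] at h2
      have e3 : A ^ (k + 2) = (2 : ℝ)⁻¹ • (A ^ (k + 2) + A ^ (k + 2)) := by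
        rw [← two_smul ℝ, smul_smul]
        norm_num
      rw [e3]
      exact S.smul_mem _ h2
  -- S closed under aeval of polynomials with zero constant term
  have haeval : ∀ A ∈ S, ∀ p : ℝ[X], p.coeff 0 = 0 → aeval A p ∈ S := by
    intro A hA p hp
    rw [Polynomial.aeval_eq_sum_range]
    apply Submodule.sum_mem
    intro k _
    cases k with
    | zero => simp [hp]
    | succ m => exact S.smul_mem _ (hpow A hA m)
  -- Y is hermitian
  have hherm : Y.IsHermitian := by
    rw [Matrix.IsHermitian, Matrix.conjTranspose_eq_transpose_of_trivial]
    exact hSsym Y hYS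
  set μ : Fin n → ℝ := hherm.eigenvalues with hμdef
  set U : Matrix (Fin n) (Fin n) ℝ := (hherm.eigenvectorUnitary : Matrix (Fin n) (Fin n) ℝ)
    with hUdef
  have hU1 : star U * U = 1 :=
    Matrix.mem_unitaryGroup_iff'.mp hherm.eigenvectorUnitary.2
  have hU2 : U * star U = 1 :=
    Matrix.mem_unitaryGroup_iff.mp hherm.eigenvectorUnitary.2
  have hspec : Y = U * diagonal μ * star U := by
    have := hherm.spectral_theorem
    rwa [RCLike.ofReal_real_eq_id, Function.id_comp] at this
  -- conjugation commutes with powers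
  have hconjpow : ∀ (D : Matrix (Fin n) (Fin n) ℝ) (k : ℕ),
      (U * D * star U) ^ k = U * D ^ k * star U := by
    intro D k
    induction k with
    | zero => simp [hU2]
    | succ k ih =>
      rw [pow_succ, ih, pow_succ]
      simp only [Matrix.mul_assoc]
      rw [← Matrix.mul_assoc (star U) U, hU1, Matrix.one_mul]
  -- conjugation commutes with aeval
  have haconj : ∀ (D : Matrix (Fin n) (Fin n) ℝ) (p : ℝ[X]),
      aeval (U * D * star U) p = U * aeval D p * star U := by
    intro D p
    rw [Polynomial.aeval_eq_sum_range, Polynomial.aeval_eq_sum_range]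
    rw [Finset.mul_sum, Finset.sum_mul]
    apply Finset.sum_congr rfl
    intro k _
    rw [hconjpow, mul_smul_comm, smul_mul_assoc]
  -- eigenvalues are nonnegative
  have hev : ∀ i, 0 ≤ μ i := by
    intro i
    by_contra hneg
    push_neg at hneg
    have hne : μ i ≠ 0 := ne_of_lt hneg
    set s : Finset ℝ := insert (0 : ℝ) (Finset.image μ Finset.univ) with hsdef
    set f : ℝ → ℝ := fun x => if x = μ i then 1 else 0 with hfdef
    set p : ℝ[X] := Lagrange.interpolate s id f with hpdef
    have hnode : ∀ x ∈ s, p.eval x = f x := by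
      intro x hx
      have := Lagrange.eval_interpolate_at_node (v := id) (r := f)
        (Set.injOn_id _) hx
      exact this
    have hp0 : p.coeff 0 = 0 := by
      rw [Polynomial.coeff_zero_eq_eval_zero, hnode 0 (Finset.mem_insert_self _ _)]
      simp only [hfdef]
      rw [if_neg (by exact fun h => hne h.symm)]
    have hmem : ∀ j, μ j ∈ s := fun j =>
      Finset.mem_insert_of_mem (Finset.mem_image_of_mem μ (Finset.mem_univ j))
    set E : Matrix (Fin n) (Fin n) ℝ := aeval Y p with hEdef
    have hE : E = U * diagonal (fun j => f (μ j)) * star U := by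
      rw [hEdef, hspec, haconj, aux_aeval_diagonal]
      have hfun : (fun j => p.eval (μ j)) = fun j => f (μ j) :=
        funext fun j => hnode (μ j) (hmem j)
      rw [hfun]
    have hES : E ∈ S := haeval Y hYS p hp0
    have hPE : P E = E := hPfix E hES
    -- E is PSD
    have hind : (0 : Fin n → ℝ) ≤ fun j => f (μ j) := by
      intro j
      simp only [hfdef, Pi.zero_apply]
      split_ifs <;> norm_num
    have hEPSD : E.PosSemidef := by
      rw [hE, Matrix.star_eq_conjTranspose U]
      exact (Matrix.PosSemidef.diagonal hind).mul_mul_conjTranspose_same U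
    -- E is idempotent
    have hEE : E * E = E := by
      rw [hE]
      simp only [Matrix.mul_assoc]
      rw [← Matrix.mul_assoc (star U) U, hU1, Matrix.one_mul,
        ← Matrix.mul_assoc (diagonal _), Matrix.diagonal_mul_diagonal]
      have hff : (fun j => f (μ j) * f (μ j)) = fun j => f (μ j) := by
        funext j
        simp only [hfdef]
        split_ifs <;> norm_num
      rw [hff]
    -- trace of Y * E
    have hYE : (Y * E).trace = μ i * (∑ j, f (μ j)) := by
      rw [hspec, hE]
      have : (U * diagonal μ * star U) * (U * diagonal (fun j => f (μ j)) * star U)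
          = U * (diagonal μ * diagonal (fun j => f (μ j))) * star U := by
        simp only [Matrix.mul_assoc]
        rw [← Matrix.mul_assoc (star U) U, hU1, Matrix.one_mul]
      rw [this, Matrix.diagonal_mul_diagonal]
      rw [Matrix.trace_mul_cycle, hU1, Matrix.one_mul,
        Matrix.trace_diagonal, Finset.mul_sum]
      apply Finset.sum_congr rfl
      intro j _
      by_cases h : μ j = μ i
      · simp [hfdef, h]
      · simp [hfdef, h]
    -- trace of Y * E equals trace of X * E
    have hXE : (Y * E).trace = (X * E).trace := by
      rw [hYdef, hsa X E, hPE]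
    -- trace of X * E is nonnegative
    have hXEnn : 0 ≤ (X * E).trace := by
      have h1 : X * E = X * (E * E) := by rw [hEE]
      have h2 : (X * (E * E)).trace = (E * X * E).trace := by
        rw [← Matrix.mul_assoc, Matrix.trace_mul_cycle, Matrix.mul_assoc,
          ← Matrix.mul_assoc]
      have h3 : (E * X * E).PosSemidef := by
        have := hX.mul_mul_conjTranspose_same E
        rwa [hEPSD.1.eq] at this
      rw [h1, h2]
      exact aux_trace_nonneg h3
    -- the multiplicity is positive
    have hsum : 0 < ∑ j, f (μ j) := by
      have h1 : (1 : ℝ) ≤ ∑ j, f (μ j) := by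
        have := Finset.single_le_sum (f := fun j => f (μ j))
          (fun j _ => hind j) (Finset.mem_univ i)
        simpa [hfdef] using this
      linarith
    have : 0 ≤ μ i * (∑ j, f (μ j)) := by rw [← hYE, hXE]; exact hXEnn
    nlinarith
  -- conclude
  show Y.PosSemidef
  rw [hspec, Matrix.star_eq_conjTranspose U]
  exact (Matrix.PosSemidef.diagonal hev).mul_mul_conjTranspose_same U
end

section
/- Let S ⊆ Sⁿ be a linear subspace invariant under squaring and nonzero. Then S contains a matrix E that is a unit for S under matrix multiplication: E is idempotent (E² = E) and EX = XE = X for all X ∈ S. -/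
open Matrix Polynomial

theorem aeval_diag_aux {k : ℕ} (d : Fin k → ℝ) (p : ℝ[X]) :
    aeval (Matrix.diagonal d) p = Matrix.diagonal (fun i => p.eval (d i)) := by
  have h := Polynomial.aeval_algHom_apply (Matrix.diagonalAlgHom (R := ℝ) (n := Fin k) (α := ℝ)) d p
  simp only [Matrix.diagonalAlgHom_apply] at h
  rw [h]
  have h3 : (aeval d) p = fun i => eval (d i) p := by
    funext i
    have h2 := Polynomial.aeval_algHom_apply (Pi.evalAlgHom ℝ (fun _ => ℝ) i) d p
    simp only [Pi.evalAlgHom_apply] at h2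
    rw [← h2]; simp [Polynomial.aeval_def]
  rw [h3]

theorem aeval_conj_aux {k : ℕ} (V W D : Matrix (Fin k) (Fin k) ℝ)
    (hVW : V * W = 1) (hWV : W * V = 1) (p : ℝ[X]) :
    aeval (V * D * W) p = V * aeval D p * W := by
  have hpow : ∀ i : ℕ, (V * D * W) ^ i = V * D ^ i * W := by
    intro i
    induction i with
    | zero => rw [pow_zero, pow_zero, mul_one, hVW]
    | succ i ih =>
      rw [pow_succ, ih, pow_succ]
      calc V * D ^ i * W * (V * D * W) = V * (D ^ i * (W * V) * D) * W := by noncomm_ring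
        _ = V * (D ^ i * D) * W := by rw [hWV, mul_one]
        _ = V * (D ^ i * D) * W := rfl
  rw [Polynomial.aeval_eq_sum_range, Polynomial.aeval_eq_sum_range, Finset.mul_sum,
    Finset.sum_mul]
  refine Finset.sum_congr rfl fun i _ => ?_
  rw [hpow i, mul_smul_comm, smul_mul_assoc]

theorem specproj_aux {k : ℕ} {Z : Matrix (Fin k) (Fin k) ℝ} (hZ : Z.IsHermitian)
    (hZ0 : Z ≠ 0) :
    ∃ p : ℝ[X], p.coeff 0 = 0 ∧ aeval Z p * aeval Z p = aeval Z p ∧ aeval Z p ≠ 0 := by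
  set V : Matrix (Fin k) (Fin k) ℝ := (hZ.eigenvectorUnitary : Matrix (Fin k) (Fin k) ℝ) with hV
  have hV1 : V * star V = 1 := (Matrix.mem_unitaryGroup_iff).mp hZ.eigenvectorUnitary.2
  have hV2 : star V * V = 1 := (Matrix.mem_unitaryGroup_iff').mp hZ.eigenvectorUnitary.2
  set d := hZ.eigenvalues with hd
  have hZd : Z = V * diagonal d * star V := by
    have h := hZ.spectral_theorem
    rw [Unitary.conjStarAlgAut_apply] at h
    exact h
  set s : Finset ℝ := insert (0 : ℝ) (Finset.image d Finset.univ) with hs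
  set r : ℝ → ℝ := fun x => if x = 0 then 0 else 1 with hr
  set p : ℝ[X] := Lagrange.interpolate s id r with hp
  have hinj : Set.InjOn id (s : Set ℝ) := Function.injective_id.injOn
  have heval : ∀ x ∈ s, p.eval x = r x := fun x hx =>
    Lagrange.eval_interpolate_at_node r hinj hx
  have hc0 : p.coeff 0 = 0 := by
    rw [Polynomial.coeff_zero_eq_eval_zero, heval 0 (Finset.mem_insert_self _ _), hr]
    norm_num
  set e : Fin k → ℝ := fun i => p.eval (d i) with he
  have hei : ∀ i, e i = if d i = 0 then 0 else 1 := by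
    intro i
    rw [he]
    exact heval (d i) (Finset.mem_insert_of_mem (Finset.mem_image_of_mem d (Finset.mem_univ i)))
  have key : aeval Z p = V * diagonal e * star V := by
    rw [hZd, aeval_conj_aux V (star V) (diagonal d) hV1 hV2, aeval_diag_aux]
  have hidem : aeval Z p * aeval Z p = aeval Z p := by
    rw [key]
    have h4 : V * diagonal e * star V * (V * diagonal e * star V)
        = V * (diagonal e * (star V * V) * diagonal e) * star V := by noncomm_ring
    rw [h4, hV2, mul_one, diagonal_mul_diagonal]
    have h5 : (fun i => e i * e i) = e := by
      funext i
      rw [hei i]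
      by_cases h : d i = 0 <;> simp [h]
    congr 2
    rw [h5]
  refine ⟨p, hc0, hidem, ?_⟩
  intro h0
  rw [key] at h0
  have hde : diagonal e = 0 := by
    have h5 : star V * (V * diagonal e * star V) * V
        = star V * (0 : Matrix (Fin k) (Fin k) ℝ) * V := by rw [h0]
    rw [mul_zero, zero_mul] at h5
    calc diagonal e = (star V * V) * diagonal e * (star V * V) := by rw [hV2]; noncomm_ring
      _ = star V * (V * diagonal e * star V) * V := by noncomm_ring
      _ = 0 := h5
  have hd0 : ∀ i, d i = 0 := by
    intro i
    by_contra hne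
    have h6 : e i = 1 := by rw [hei i, if_neg hne]
    have h2 : diagonal e i i = (0 : Matrix (Fin k) (Fin k) ℝ) i i := by rw [hde]
    simp [Matrix.diagonal_apply_eq, h6] at h2
  apply hZ0
  have h7 : diagonal d = 0 := by
    ext i j
    by_cases hij : i = j
    · subst hij; simp [hd0 i]
    · simp [Matrix.diagonal_apply_ne _ hij]
  rw [hZd, h7, mul_zero, zero_mul]

theorem rank_aux {k : ℕ} {E P : Matrix (Fin k) (Fin k) ℝ}
    (hE : E * E = E) (hP : P * P = P) (hEP : E * P = 0) (hPE : P * E = 0) (hP0 : P ≠ 0) :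
    E.rank < (E + P).rank := by
  set rE := LinearMap.range E.mulVecLin with hrE
  set rP := LinearMap.range P.mulVecLin with hrP
  have hle : rE ⊔ rP ≤ LinearMap.range (E + P).mulVecLin := by
    apply sup_le
    · have h1 : (E + P) * E = E := by rw [add_mul, hE, hPE, add_zero]
      have h2 : E.mulVecLin = (E + P).mulVecLin.comp E.mulVecLin := by
        rw [← Matrix.mulVecLin_mul, h1]
      rw [hrE, h2]
      exact LinearMap.range_comp_le_range _ _
    · have h1 : (E + P) * P = P := by rw [add_mul, hP, hEP, zero_add]
      have h2 : P.mulVecLin = (E + P).mulVecLin.comp P.mulVecLin := by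
        rw [← Matrix.mulVecLin_mul, h1]
      rw [hrP, h2]
      exact LinearMap.range_comp_le_range _ _
  have hdisj : rE ⊓ rP = ⊥ := by
    rw [eq_bot_iff]
    rintro v ⟨hvE, hvP⟩
    obtain ⟨a, ha⟩ := hvE
    obtain ⟨b, hb⟩ := hvP
    simp only [Matrix.mulVecLin_apply] at ha hb
    have h1 : E *ᵥ v = v := by
      rw [← ha, Matrix.mulVec_mulVec, hE]
    have h2 : E *ᵥ v = 0 := by
      rw [← hb, Matrix.mulVec_mulVec, hEP, Matrix.zero_mulVec]
    simp only [Submodule.mem_bot]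
    rw [← h1, h2]
  have hsum : Module.finrank ℝ (rE ⊔ rP : Submodule ℝ (Fin k → ℝ)) = E.rank + P.rank := by
    have h := Submodule.finrank_sup_add_finrank_inf_eq rE rP
    rw [hdisj] at h
    simpa [Matrix.rank] using h
  have hPpos : 0 < P.rank := by
    rcases Nat.eq_zero_or_pos P.rank with h0 | h0
    · exfalso
      apply hP0
      have hbot : LinearMap.range P.mulVecLin = ⊥ := Submodule.finrank_eq_zero.mp h0
      have h2 : P.mulVecLin = 0 := LinearMap.range_eq_bot.mp hbot
      ext i j
      have h3 := congrFun (LinearMap.congr_fun h2 (Pi.single j 1)) i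
      simpa [Matrix.mulVecLin_apply, Matrix.mulVec_single] using h3
    · exact h0
  have hmono : Module.finrank ℝ (rE ⊔ rP : Submodule ℝ (Fin k → ℝ)) ≤ (E + P).rank :=
    Submodule.finrank_mono hle
  omega

/-- A nonzero subspace of real symmetric matrices invariant under squaring contains a
matrix `E` that is a multiplicative unit for the subspace. -/
theorem stmt6 {n : ℕ} (S : Submodule ℝ (Matrix (Fin n) (Fin n) ℝ))
    (hSsym : ∀ A ∈ S, A.IsSymm)
    (hsq : ∀ X ∈ S, X * X ∈ S)
    (hS0 : S ≠ ⊥) :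
    ∃ E ∈ S, E * E = E ∧ ∀ X ∈ S, E * X = X ∧ X * E = X := by
  classical
  have hJ : ∀ X ∈ S, ∀ Y ∈ S, X * Y + Y * X ∈ S := by
    intro X hX Y hY
    have h := hsq (X + Y) (S.add_mem hX hY)
    have h2 : X * Y + Y * X = (X + Y) * (X + Y) - X * X - Y * Y := by noncomm_ring
    rw [h2]
    exact S.sub_mem (S.sub_mem h (hsq X hX)) (hsq Y hY)
  have hpowS : ∀ X, X ∈ S → ∀ i : ℕ, X ^ (i + 1) ∈ S := by
    intro X hX i
    induction i with
    | zero => simpa using hX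
    | succ i ih =>
      have h := hJ X hX (X ^ (i + 1)) ih
      have h2 : X ^ (i + 1 + 1) = (2⁻¹ : ℝ) • (X * X ^ (i + 1) + X ^ (i + 1) * X) := by
        rw [← pow_succ', ← pow_succ, ← two_smul ℝ (X ^ (i + 1 + 1)), smul_smul]
        norm_num
      rw [h2]
      exact S.smul_mem _ h
  have haevalS : ∀ Z, Z ∈ S → ∀ q : ℝ[X], q.coeff 0 = 0 → aeval Z q ∈ S := by
    intro Z hZ q hq
    rw [Polynomial.aeval_eq_sum_range]
    apply Submodule.sum_mem
    intro i _
    match i with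
    | 0 => rw [hq]; simpa using S.zero_mem
    | (j + 1) => exact S.smul_mem _ (hpowS Z hZ j)
  have hherm : ∀ X, X ∈ S → X.IsHermitian := by
    intro X hX
    rw [Matrix.IsHermitian, Matrix.conjTranspose_eq_transpose_of_trivial]
    exact hSsym X hX
  -- maximal rank idempotent
  set T : Set ℕ := {m | ∃ P, P ∈ S ∧ P * P = P ∧ P.rank = m} with hT
  have hT0 : (0 : ℕ) ∈ T := ⟨0, S.zero_mem, by rw [mul_zero], Matrix.rank_zero⟩
  have hTb : BddAbove T := by
    refine ⟨n, ?_⟩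
    rintro m ⟨P, -, -, hPr⟩
    rw [← hPr]
    simpa using P.rank_le_card_width
  obtain ⟨E, hES, hE2, hErank⟩ : sSup T ∈ T := Nat.sSup_mem ⟨0, hT0⟩ hTb
  have hmax : ∀ P, P ∈ S → P * P = P → P.rank ≤ E.rank := by
    intro P hP hPP
    rw [hErank]
    exact le_csSup hTb ⟨P, hP, hPP, rfl⟩
  have hkey : ∀ X, X ∈ S → (1 - E) * X * (1 - E) = 0 := by
    intro X hX
    by_contra hZ0
    set Z := (1 - E) * X * (1 - E) with hZdef
    have hZS : Z ∈ S := by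
      have h1 : Z = X - (E * X + X * E) + E * X * E := by rw [hZdef]; noncomm_ring
      have hEXE : E * X * E ∈ S := by
        have ha : E * X + X * E ∈ S := hJ E hES X hX
        have hb : E * (E * X + X * E) + (E * X + X * E) * E ∈ S := hJ E hES _ ha
        have hc : E * X * E = (2⁻¹ : ℝ) •
            ((E * (E * X + X * E) + (E * X + X * E) * E) - (E * X + X * E)) := by
          have hd : E * (E * X + X * E) + (E * X + X * E) * E
              = E * E * X + E * X * E + (E * X * E + X * (E * E)) := by noncomm_ring
          rw [hd, hE2]
          module
        rw [hc]
        exact S.smul_mem _ (S.sub_mem hb ha)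
      rw [h1]
      exact S.add_mem (S.sub_mem hX (hJ E hES X hX)) hEXE
    have hEZ : E * Z = 0 := by
      have h : E * Z = (E * (1 - E)) * X * (1 - E) := by rw [hZdef]; noncomm_ring
      have hE1 : E * (1 - E) = 0 := by rw [mul_sub, mul_one, hE2, sub_self]
      rw [h, hE1, zero_mul, zero_mul]
    have hZE : Z * E = 0 := by
      have h : Z * E = (1 - E) * X * ((1 - E) * E) := by rw [hZdef]; noncomm_ring
      have hE1 : (1 - E) * E = 0 := by rw [sub_mul, one_mul, hE2, sub_self]
      rw [h, hE1, mul_zero]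
    obtain ⟨q, hq0, hqi, hqne⟩ := specproj_aux (hherm Z hZS) hZ0
    have hPS : aeval Z q ∈ S := haevalS Z hZS q hq0
    have hEP : E * aeval Z q = 0 := by
      rw [Polynomial.aeval_eq_sum_range, Finset.mul_sum]
      apply Finset.sum_eq_zero
      intro i _
      rw [mul_smul_comm]
      match i with
      | 0 => rw [hq0]; simp
      | (j + 1) =>
        rw [pow_succ', ← mul_assoc, hEZ, zero_mul, smul_zero]
    have hPE : aeval Z q * E = 0 := by
      rw [Polynomial.aeval_eq_sum_range, Finset.sum_mul]
      apply Finset.sum_eq_zero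
      intro i _
      rw [smul_mul_assoc]
      match i with
      | 0 => rw [hq0]; simp
      | (j + 1) =>
        rw [pow_succ, mul_assoc, hZE, mul_zero, smul_zero]
    have hsumidem : (E + aeval Z q) * (E + aeval Z q) = E + aeval Z q := by
      rw [add_mul, mul_add, mul_add, hE2, hqi, hEP, hPE]
      abel
    have hle : (E + aeval Z q).rank ≤ E.rank := hmax _ (S.add_mem hES hPS) hsumidem
    have hlt : E.rank < (E + aeval Z q).rank := rank_aux hE2 hqi hEP hPE hqne
    omega
  refine ⟨E, hES, hE2, ?_⟩
  intro X hX
  have h1E : (1 - E)ᵀ = 1 - E := by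
    rw [Matrix.transpose_sub, Matrix.transpose_one, hSsym E hES]
  have hEX : E * X = X := by
    have hW : ((1 - E) * X) * ((1 - E) * X)ᵀ = 0 := by
      rw [Matrix.transpose_mul, h1E, hSsym X hX]
      have h : (1 - E) * X * (X * (1 - E)) = (1 - E) * (X * X) * (1 - E) := by noncomm_ring
      rw [h, hkey (X * X) (hsq X hX)]
    have hW0 : (1 - E) * X = 0 := by
      have h := hW
      rw [← Matrix.conjTranspose_eq_transpose_of_trivial] at h
      exact Matrix.self_mul_conjTranspose_eq_zero.mp h
    have h2 := sub_mul 1 E X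
    rw [hW0, one_mul] at h2
    exact (sub_eq_zero.mp h2.symm).symm
  have hXE : X * E = X := by
    have h := congrArg Matrix.transpose hEX
    rw [Matrix.transpose_mul, hSsym X hX, hSsym E hES] at h
    exact h
  exact ⟨hEX, hXE⟩
end

section
/- Let P : Sʳ → Sʳ be an orthogonal projection (with respect to the trace inner product) that is positive (maps psd matrices to psd matrices) and satisfies P(I) = I. Then the range of P is invariant under squaring: for every X in the range of P, X² is in the range of P. -/
open Matrix

/-- A positive semidefinite real matrix with zero trace is zero. -/
lemma psd_trace_eq_zero_aux {r : ℕ} {A : Matrix (Fin r) (Fin r) ℝ} (hA : A.PosSemidef)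
    (h : A.trace = 0) : A = 0 := by
  obtain ⟨B, rfl⟩ : ∃ B : Matrix (Fin r) (Fin r) ℝ, A = Bᴴ * B :=
    ⟨0, by simpa using hA.trace_eq_zero_iff.mp h⟩
  have hB : B = 0 := by
    have htr : ∑ i, ∑ j, (B j i) ^ 2 = 0 := by
      simpa [Matrix.trace, Matrix.diag, Matrix.mul_apply, Matrix.conjTranspose_apply, sq] using h
    have : ∀ i ∈ Finset.univ, ∀ j ∈ Finset.univ, (B j i : ℝ) ^ 2 = 0 := by
      intro i _ j _
      have h1 : ∀ i ∈ (Finset.univ : Finset (Fin r)), 0 ≤ ∑ j, (B j i) ^ 2 :=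
        fun i _ => Finset.sum_nonneg fun j _ => sq_nonneg _
      have := (Finset.sum_eq_zero_iff_of_nonneg h1).mp htr i (Finset.mem_univ i)
      exact (Finset.sum_eq_zero_iff_of_nonneg (fun j _ => sq_nonneg _)).mp this j
        (Finset.mem_univ j)
    ext j i
    exact pow_eq_zero_iff (n := 2) (by norm_num) |>.mp
      (this i (Finset.mem_univ i) j (Finset.mem_univ j))
  simp [hB]

/-- If `P : Sʳ → Sʳ` is an orthogonal projection (w.r.t. the trace inner product) that is
positive and unital (`P I = I`), then its range is invariant under squaring. -/
theorem stmt7 {r : ℕ}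
    (P : Matrix (Fin r) (Fin r) ℝ →ₗ[ℝ] Matrix (Fin r) (Fin r) ℝ)
    (hsymP : ∀ A : Matrix (Fin r) (Fin r) ℝ, A.IsSymm → (P A).IsSymm)
    (hsa : ∀ A B : Matrix (Fin r) (Fin r) ℝ, A.IsSymm → B.IsSymm →
      (P A * B).trace = (A * P B).trace)
    (hidem : ∀ A : Matrix (Fin r) (Fin r) ℝ, A.IsSymm → P (P A) = P A)
    (hpos : ∀ A : Matrix (Fin r) (Fin r) ℝ, A.PosSemidef → (P A).PosSemidef)
    (hP1 : P 1 = 1) :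
    ∀ X : Matrix (Fin r) (Fin r) ℝ, X.IsSymm → P X = X → P (X * X) = X * X := by
  intro X hX hPX
  have hherm : X.IsHermitian := by
    rw [Matrix.IsHermitian, conjTranspose_eq_transpose_of_trivial]; exact hX
  set U : Matrix (Fin r) (Fin r) ℝ := (hherm.eigenvectorUnitary : Matrix (Fin r) (Fin r) ℝ)
    with hU
  set lam := hherm.eigenvalues with hlam
  set E : Fin r → Matrix (Fin r) (Fin r) ℝ :=
    fun i => vecMulVec (fun j => U j i) (fun j => U j i) with hE
  have key : ∀ d : Fin r → ℝ, U * diagonal d * Uᴴ = ∑ i, d i • E i := by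
    intro d
    ext j k
    simp only [Matrix.mul_apply, Matrix.mul_diagonal, Matrix.conjTranspose_apply, star_trivial,
      Matrix.sum_apply, Matrix.smul_apply, hE, vecMulVec_apply, smul_eq_mul,
      Matrix.diagonal_apply, mul_ite, mul_zero, ite_mul, zero_mul, Finset.sum_ite_eq,
      Finset.sum_ite_eq', Finset.mem_univ, if_true]
    exact Finset.sum_congr rfl fun i _ => by ring
  have hUU : U * Uᴴ = 1 := by
    have := Matrix.mem_unitaryGroup_iff.mp hherm.eigenvectorUnitary.2
    simpa [Matrix.star_eq_conjTranspose] using this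
  have hU'U : Uᴴ * U = 1 := by
    have := Matrix.mem_unitaryGroup_iff'.mp hherm.eigenvectorUnitary.2
    simpa [Matrix.star_eq_conjTranspose] using this
  have hone : (1 : Matrix (Fin r) (Fin r) ℝ) = ∑ i, E i := by
    calc (1 : Matrix (Fin r) (Fin r) ℝ) = U * diagonal (1 : Fin r → ℝ) * Uᴴ := by
          rw [show diagonal (1 : Fin r → ℝ) = 1 from diagonal_one, mul_one, hUU]
      _ = ∑ i, (1 : Fin r → ℝ) i • E i := key _
      _ = ∑ i, E i := by simp
  have hXU : X = U * diagonal lam * Uᴴ := by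
    simpa [Matrix.star_eq_conjTranspose] using hherm.spectral_theorem
  have hXsum : X = ∑ i, lam i • E i := by rw [hXU, key]
  have hX2 : X * X = ∑ i, (lam i * lam i) • E i := by
    rw [← key, hXU]
    calc U * diagonal lam * Uᴴ * (U * diagonal lam * Uᴴ)
        = U * diagonal lam * (Uᴴ * U) * (diagonal lam * Uᴴ) := by noncomm_ring
      _ = U * (diagonal lam * diagonal lam) * Uᴴ := by rw [hU'U]; noncomm_ring
      _ = U * diagonal (fun i => lam i * lam i) * Uᴴ := by rw [diagonal_mul_diagonal]
  have hEpsd : ∀ i, (E i).PosSemidef := by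
    intro i
    refine posSemidef_iff_dotProduct_mulVec.mpr ⟨?_, ?_⟩
    · rw [Matrix.IsHermitian, conjTranspose_eq_transpose_of_trivial]
      ext j k; simp [hE, vecMulVec_apply, mul_comm]
    · intro x
      have : (star x) ⬝ᵥ (E i *ᵥ x) = (∑ j, U j i * x j) * (∑ j, U j i * x j) := by
        simp only [dotProduct, mulVec, hE, vecMulVec_apply, star_trivial]
        rw [Finset.sum_mul_sum]
        refine Finset.sum_congr rfl fun j _ => ?_
        rw [Finset.mul_sum]
        exact Finset.sum_congr rfl fun k _ => by ring
      rw [this]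
      exact mul_self_nonneg _
  -- images under P
  set F : Fin r → Matrix (Fin r) (Fin r) ℝ := fun i => P (E i) with hF
  have hFpsd : ∀ i, (F i).PosSemidef := fun i => hpos _ (hEpsd i)
  have hFone : (1 : Matrix (Fin r) (Fin r) ℝ) = ∑ i, F i := by
    conv_lhs => rw [← hP1, hone]
    rw [map_sum]
  have hXF : X = ∑ i, lam i • F i := by
    conv_lhs => rw [← hPX, hXsum]
    rw [map_sum]
    simp [hF]
  have hPX2 : P (X * X) = ∑ i, (lam i * lam i) • F i := by
    rw [hX2, map_sum]
    simp [hF]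
  -- symmetry facts
  have hXX : (X * X).IsSymm := by
    rw [Matrix.IsSymm, transpose_mul, hX]
  have hXc : Xᴴ = X := hherm
  -- the difference is positive semidefinite (Kadison-type argument)
  have hDsum : P (X * X) - X * X
      = ∑ i, (X - lam i • 1) * F i * (X - lam i • 1)ᴴ := by
    have hct : ∀ c : ℝ, (X - c • (1 : Matrix (Fin r) (Fin r) ℝ))ᴴ = X - c • 1 := by
      intro c
      rw [conjTranspose_sub, hXc, conjTranspose_smul, conjTranspose_one]
      norm_num
    have hterm : ∀ i, (X - lam i • 1) * F i * (X - lam i • 1)ᴴ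
        = (X * F i * X + (lam i * lam i) • F i) - (lam i • (X * F i) + lam i • (F i * X)) := by
      intro i
      rw [hct]
      simp only [sub_mul, mul_sub, Matrix.smul_mul, Matrix.mul_smul, smul_smul,
        Matrix.one_mul, Matrix.mul_one]
      abel
    rw [Finset.sum_congr rfl fun i _ => hterm i, Finset.sum_sub_distrib,
      Finset.sum_add_distrib, Finset.sum_add_distrib]
    have e1 : ∑ i, X * F i * X = X * X := by
      calc ∑ i, X * F i * X = X * (∑ i, F i) * X := by
            rw [Finset.mul_sum, Finset.sum_mul]
        _ = X * X := by rw [← hFone, mul_one]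
    have e2 : ∑ i, (lam i * lam i) • F i = P (X * X) := hPX2.symm
    have e3 : ∑ i, lam i • (X * F i) = X * X := by
      calc ∑ i, lam i • (X * F i) = X * ∑ i, lam i • F i := by
            rw [Finset.mul_sum]
            exact Finset.sum_congr rfl fun i _ => by rw [Matrix.mul_smul]
        _ = X * X := by rw [← hXF]
    have e4 : ∑ i, lam i • (F i * X) = X * X := by
      calc ∑ i, lam i • (F i * X) = (∑ i, lam i • F i) * X := by
            rw [Finset.sum_mul]
            exact Finset.sum_congr rfl fun i _ => by rw [Matrix.smul_mul]
        _ = X * X := by rw [← hXF]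
    rw [e1, e2, e3, e4]
    abel
  have hDpsd : (P (X * X) - X * X).PosSemidef := by
    rw [hDsum]
    refine Finset.sum_induction _ _ (fun a b ha hb => ha.add hb) ?_ ?_
    · exact Matrix.PosSemidef.zero
    · intro i _
      exact (hFpsd i).mul_mul_conjTranspose_same _
  have hDtr : (P (X * X) - X * X).trace = 0 := by
    rw [Matrix.trace_sub]
    have := hsa (X * X) 1 hXX Matrix.isSymm_one
    rw [mul_one, hP1, mul_one] at this
    rw [this, sub_self]
  have := psd_trace_eq_zero_aux hDpsd hDtr
  exact sub_eq_zero.mp this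
end

section
/- Let S ⊆ Sⁿ be a linear subspace invariant under squaring, and let X ∈ S be nonzero with spectral decomposition X = Σ_{E ∈ E_X} λ_E E, where E_X is the set of orthogonal projections onto the eigenspaces of X for the distinct nonzero eigenvalues λ_E. Then every E ∈ E_X belongs to S. -/
open Matrix

/-- If `S` is a subspace of real symmetric matrices invariant under squaring and
`X = Σ λᵢ • Eᵢ ∈ S` is nonzero with its spectral decomposition into pairwise orthogonal
nonzero symmetric idempotents `Eᵢ` with distinct nonzero eigenvalues `λᵢ`, then every
`Eᵢ` belongs to `S`. -/
theorem stmt10 {n : ℕ} {ι : Type*} [Fintype ι]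
    (S : Submodule ℝ (Matrix (Fin n) (Fin n) ℝ))
    (hSsym : ∀ A ∈ S, A.IsSymm)
    (hsq : ∀ X ∈ S, X * X ∈ S)
    (X : Matrix (Fin n) (Fin n) ℝ) (hX : X ∈ S) (hX0 : X ≠ 0)
    (lam : ι → ℝ) (E : ι → Matrix (Fin n) (Fin n) ℝ)
    (hdecomp : X = ∑ i, lam i • E i)
    (hEsym : ∀ i, (E i).IsSymm)
    (hEidem : ∀ i, E i * E i = E i)
    (hEne : ∀ i, E i ≠ 0)
    (horth : ∀ i j, i ≠ j → E i * E j = 0)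
    (hlam0 : ∀ i, lam i ≠ 0)
    (hinj : Function.Injective lam) :
    ∀ i, E i ∈ S := by
  classical
  -- cross terms: A*B + B*A ∈ S
  have hcross : ∀ A ∈ S, ∀ B ∈ S, A * B + B * A ∈ S := by
    intro A hA B hB
    have h1 : (A + B) * (A + B) ∈ S := hsq _ (S.add_mem hA hB)
    have h2 : A * B + B * A = (A + B) * (A + B) - A * A - B * B := by
      noncomm_ring
    rw [h2]
    exact S.sub_mem (S.sub_mem h1 (hsq _ hA)) (hsq _ hB)
  -- all positive powers of X lie in S
  have hpow : ∀ k : ℕ, X ^ (k + 1) ∈ S := by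
    intro k
    induction k with
    | zero => simpa using hX
    | succ k ih =>
      have h := hcross _ ih _ hX
      have h2 : X ^ (k + 1) * X + X * X ^ (k + 1) = (2 : ℝ) • X ^ (k + 2) := by
        rw [← pow_succ, ← pow_succ']
        rw [two_smul]
      rw [h2] at h
      have := S.smul_mem (2⁻¹ : ℝ) h
      rwa [smul_smul, inv_mul_cancel₀ (by norm_num : (2:ℝ) ≠ 0), one_smul] at this
  -- spectral formula for powers
  have hXpow : ∀ k : ℕ, X ^ (k + 1) = ∑ j, lam j ^ (k + 1) • E j := by
    intro k
    induction k with
    | zero => simpa using hdecomp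
    | succ k ih =>
      rw [pow_succ, ih, hdecomp, Finset.sum_mul_sum]
      rw [Finset.sum_congr rfl (fun j _ => rfl)]
      have : ∀ j ∈ (Finset.univ : Finset ι),
          ∑ l, (lam j ^ (k+1) • E j) * (lam l • E l) = lam j ^ (k+2) • E j := by
        intro j _
        rw [Finset.sum_eq_single j]
        · rw [smul_mul_smul_comm, hEidem, pow_succ]
          ring_nf
        · intro l _ hl
          rw [smul_mul_smul_comm, horth j l (Ne.symm hl), smul_zero]
        · intro h; exact absurd (Finset.mem_univ j) h
      rw [Finset.sum_congr rfl this]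
  intro i
  -- Lagrange interpolation at nodes {0} ∪ {lam j}
  set v : Option ι → ℝ := fun o => o.elim 0 lam with hv
  have hvinj : Set.InjOn v (Finset.univ : Finset (Option ι)) := by
    intro a _ b _ hab
    match a, b with
    | none, none => rfl
    | none, some j => exact absurd hab.symm (hlam0 j)
    | some j, none => exact absurd hab (hlam0 j)
    | some j, some l => exact congrArg some (hinj hab)
  set f : Option ι → ℝ := fun o => o.elim 0 (fun j => if j = i then 1 else 0) with hf
  set q : Polynomial ℝ := Lagrange.interpolate Finset.univ v f with hq
  have hq0 : q.eval 0 = 0 :=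
    Lagrange.eval_interpolate_at_node f hvinj (Finset.mem_univ (none : Option ι))
  have hqj : ∀ j, q.eval (lam j) = if j = i then 1 else 0 := fun j =>
    Lagrange.eval_interpolate_at_node f hvinj (Finset.mem_univ (some j))
  have hc0 : q.coeff 0 = 0 := by
    rwa [Polynomial.coeff_zero_eq_eval_zero]
  -- E i as a linear combination of powers of X
  have hE : E i = ∑ k ∈ q.support, q.coeff k • X ^ k := by
    have hk : ∀ k ∈ q.support, q.coeff k • X ^ k
        = ∑ j, (q.coeff k * lam j ^ k) • E j := by
      intro k hk
      have hk0 : k ≠ 0 := fun h => by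
        rw [h] at hk; exact (Polynomial.mem_support_iff.mp hk) hc0
      obtain ⟨m, rfl⟩ := Nat.exists_eq_succ_of_ne_zero hk0
      rw [hXpow m, Finset.smul_sum]
      exact Finset.sum_congr rfl fun j _ => by rw [smul_smul]
    rw [Finset.sum_congr rfl hk, Finset.sum_comm]
    have : ∀ j ∈ (Finset.univ : Finset ι),
        ∑ k ∈ q.support, (q.coeff k * lam j ^ k) • E j = (q.eval (lam j)) • E j := by
      intro j _
      rw [← Finset.sum_smul]
      congr 1
      rw [Polynomial.eval_eq_sum, Polynomial.sum_def]
    rw [Finset.sum_congr rfl this]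
    rw [Finset.sum_congr rfl (fun j _ => by rw [hqj j])]
    simp
  rw [hE]
  refine S.sum_mem fun k hk => ?_
  have hk0 : k ≠ 0 := fun h => by
    rw [h] at hk; exact (Polynomial.mem_support_iff.mp hk) hc0
  obtain ⟨m, rfl⟩ := Nat.exists_eq_succ_of_ne_zero hk0
  exact S.smul_mem _ (hpow m)
end

section
/- Let V and W be finite-dimensional real inner product spaces, C ⊆ V and K ⊆ W self-dual closed convex cones, and T : V → W an injective linear map with adjoint T*. If T(C) = K, then T*T(C) = C. -/
/-- If `T` is an injective linear map between finite-dimensional real inner product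
spaces mapping a self-dual cone `C` onto a self-dual cone `K`, then `T*T(C) = C`. -/
theorem stmt11 {V W : Type*} [NormedAddCommGroup V] [InnerProductSpace ℝ V]
    [FiniteDimensional ℝ V] [NormedAddCommGroup W] [InnerProductSpace ℝ W]
    [FiniteDimensional ℝ W]
    (C : Set V) (K : Set W)
    (hC : C = {y : V | ∀ x ∈ C, 0 ≤ (inner ℝ x y : ℝ)})
    (hK : K = {y : W | ∀ x ∈ K, 0 ≤ (inner ℝ x y : ℝ)})
    (T : V →ₗ[ℝ] W) (hT : Function.Injective T)
    (hTC : T '' C = K) :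
    (LinearMap.adjoint T ∘ₗ T) '' C = C := by
  set S := LinearMap.adjoint T ∘ₗ T with hS
  have hCC : ∀ a ∈ C, ∀ b ∈ C, 0 ≤ (inner ℝ a b : ℝ) := by
    intro a ha b hb
    rw [hC] at hb; exact hb a ha
  have hKK : ∀ a ∈ K, ∀ b ∈ K, 0 ≤ (inner ℝ a b : ℝ) := by
    intro a ha b hb
    rw [hK] at hb; exact hb a ha
  have hSinner : ∀ a x : V, (inner ℝ a (S x) : ℝ) = inner ℝ (T a) (T x) := by
    intro a x
    simp [hS, LinearMap.adjoint_inner_right]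
  have hSsub : S '' C ⊆ C := by
    rintro _ ⟨x, hx, rfl⟩
    rw [hC]
    intro a ha
    rw [hSinner]
    exact hKK _ (hTC ▸ ⟨a, ha, rfl⟩) _ (hTC ▸ ⟨x, hx, rfl⟩)
  have hSinj : Function.Injective S := by
    intro x y h
    have h0 : S (x - y) = 0 := by rw [map_sub, h, sub_self]
    have h1 : (inner ℝ (T (x - y)) (T (x - y)) : ℝ) = 0 := by
      rw [← hSinner, h0, inner_zero_right]
    have h2 : T (x - y) = 0 := inner_self_eq_zero.mp h1
    have h3 : x - y = 0 := hT (by rw [h2, map_zero])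
    exact sub_eq_zero.mp h3
  have hSsurj : Function.Surjective S := LinearMap.injective_iff_surjective.mp hSinj
  have hSsup : C ⊆ S '' C := by
    intro x hx
    obtain ⟨c, hc⟩ := hSsurj x
    have hTcK : T c ∈ K := by
      rw [hK]
      rintro k hk
      rw [← hTC] at hk
      obtain ⟨a, ha, rfl⟩ := hk
      have h := hSinner a c
      rw [hc] at h
      rw [← h]
      exact hCC a ha x hx
    rw [← hTC] at hTcK
    obtain ⟨b, hb, hbc⟩ := hTcK
    have hbeq : b = c := hT hbc
    exact ⟨c, hbeq ▸ hb, hc⟩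
  exact Set.Subset.antisymm hSsub hSsup
end

section
/- Let R ⊆ [n] × [n] be a symmetric relation and let S be the span of {E_{ij} + E_{ji} : (i,j) ∈ R} in Sⁿ. Then S is invariant under squaring (X² ∈ S for all X ∈ S) if and only if R is transitive. -/
open Matrix

lemma aux_sum1 {n : ℕ} (f : Fin n → Fin n → ℝ) (a b : Fin n) :
    (∑ i : Fin n, ∑ j : Fin n, f i j • Matrix.single i j (1:ℝ)) a b = f a b := by
  simp [Matrix.sum_apply, Matrix.single, ite_and, Finset.sum_ite_eq]

lemma aux_sum2 {n : ℕ} (f : Fin n → Fin n → ℝ) (a b : Fin n) :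
    (∑ i : Fin n, ∑ j : Fin n, f i j • Matrix.single j i (1:ℝ)) a b = f b a := by
  simp [Matrix.sum_apply, Matrix.single, ite_and, Finset.sum_ite_eq]

lemma aux_mem_span {n : ℕ} (R : Fin n → Fin n → Prop)
    (hsymm : ∀ i j, R i j → R j i)
    (X : Matrix (Fin n) (Fin n) ℝ)
    (hX : ∀ i j, X i j = X j i)
    (hsupp : ∀ i j, ¬ R i j → X i j = 0) :
    X ∈ Submodule.span ℝ
      {A : Matrix (Fin n) (Fin n) ℝ | ∃ i j, R i j ∧
        A = Matrix.single i j 1 + Matrix.single j i 1} := by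
  classical
  set c : Fin n → Fin n → ℝ := fun i j => if R i j then X i j / 2 else 0 with hc
  have hrep : X = ∑ i : Fin n, ∑ j : Fin n,
      c i j • (Matrix.single i j (1:ℝ) + Matrix.single j i 1) := by
    have hsplit : (∑ i : Fin n, ∑ j : Fin n,
        c i j • (Matrix.single i j (1:ℝ) + Matrix.single j i 1)) =
        (∑ i : Fin n, ∑ j : Fin n, c i j • Matrix.single i j (1:ℝ)) +
        (∑ i : Fin n, ∑ j : Fin n, c i j • Matrix.single j i (1:ℝ)) := by
      simp [smul_add, Finset.sum_add_distrib]
    rw [hsplit]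
    ext a b
    rw [Matrix.add_apply, aux_sum1, aux_sum2, hc]
    by_cases h : R a b
    · have h' : R b a := hsymm _ _ h
      simp only [h, h', if_true]
      rw [hX b a]
      ring
    · have h' : ¬ R b a := fun hh => h (hsymm _ _ hh)
      simp [h, h', hsupp a b h]
  rw [hrep]
  refine Submodule.sum_mem _ fun i _ => Submodule.sum_mem _ fun j _ => ?_
  by_cases h : R i j
  · exact Submodule.smul_mem _ _ (Submodule.subset_span ⟨i, j, h, rfl⟩)
  · simp [hc, h]

lemma aux_span_le {n : ℕ} (R : Fin n → Fin n → Prop)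
    (hsymm : ∀ i j, R i j → R j i)
    (X : Matrix (Fin n) (Fin n) ℝ)
    (hX : X ∈ Submodule.span ℝ
      {A : Matrix (Fin n) (Fin n) ℝ | ∃ i j, R i j ∧
        A = Matrix.single i j 1 + Matrix.single j i 1}) :
    (∀ i j, X i j = X j i) ∧ (∀ i j, ¬ R i j → X i j = 0) := by
  classical
  induction hX using Submodule.span_induction with
  | mem A hA =>
    obtain ⟨i, j, hij, rfl⟩ := hA
    constructor
    · intro a b
      simp [Matrix.single]
      by_cases h1 : i = a <;> by_cases h2 : j = b <;> by_cases h3 : j = a <;>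
        by_cases h4 : i = b <;> simp_all
    · intro a b hab
      simp only [Matrix.add_apply, Matrix.single, Matrix.of_apply]
      rw [if_neg, if_neg]
      · simp
      · rintro ⟨rfl, rfl⟩; exact hab (hsymm _ _ hij)
      · rintro ⟨rfl, rfl⟩; exact hab hij
  | zero => simp
  | add A B _ _ hA hB =>
    exact ⟨fun i j => by rw [Matrix.add_apply, Matrix.add_apply, hA.1, hB.1],
      fun i j h => by rw [Matrix.add_apply, hA.2 i j h, hB.2 i j h, add_zero]⟩
  | smul r A _ hA =>
    exact ⟨fun i j => by rw [Matrix.smul_apply, Matrix.smul_apply, hA.1],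
      fun i j h => by rw [Matrix.smul_apply, hA.2 i j h, smul_zero]⟩

/-- For a symmetric relation `R` on `[n]`, the coordinate subspace spanned by
`{E_{ij} + E_{ji} : (i,j) ∈ R}` is invariant under squaring iff `R` is transitive. -/
theorem stmt15 {n : ℕ} (R : Fin n → Fin n → Prop)
    (hsymm : ∀ i j, R i j → R j i) :
    (∀ X ∈ Submodule.span ℝ
        {A : Matrix (Fin n) (Fin n) ℝ | ∃ i j, R i j ∧
          A = Matrix.single i j 1 + Matrix.single j i 1},
      X * X ∈ Submodule.span ℝ
        {A : Matrix (Fin n) (Fin n) ℝ | ∃ i j, R i j ∧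
          A = Matrix.single i j 1 + Matrix.single j i 1}) ↔
    (∀ i j k, R i j → R j k → R i k) := by
  constructor
  · intro hinv i j k hij hjk
    by_contra hik
    set X : Matrix (Fin n) (Fin n) ℝ :=
      (Matrix.single i j 1 + Matrix.single j i 1) +
      (Matrix.single j k 1 + Matrix.single k j 1) with hXdef
    have hXmem : X ∈ Submodule.span ℝ
        {A : Matrix (Fin n) (Fin n) ℝ | ∃ i j, R i j ∧
          A = Matrix.single i j 1 + Matrix.single j i 1} :=
      Submodule.add_mem _ (Submodule.subset_span ⟨i, j, hij, rfl⟩)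
        (Submodule.subset_span ⟨j, k, hjk, rfl⟩)
    have hnn : ∀ a b, 0 ≤ X a b := by
      intro a b
      simp only [hXdef, Matrix.add_apply, Matrix.single, Matrix.of_apply]
      split_ifs <;> norm_num
    have h1 : (1:ℝ) ≤ X i j := by
      simp only [hXdef, Matrix.add_apply, Matrix.single, Matrix.of_apply]
      split_ifs <;>
        first
          | exact (‹¬(True ∧ True)› ⟨trivial, trivial⟩).elim
          | norm_num
    have h2 : (1:ℝ) ≤ X j k := by
      simp only [hXdef, Matrix.add_apply, Matrix.single, Matrix.of_apply]
      split_ifs <;>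
        first
          | exact (‹¬(True ∧ True)› ⟨trivial, trivial⟩).elim
          | norm_num
    have hzero : (X * X) i k = 0 :=
      (aux_span_le R hsymm _ (hinv X hXmem)).2 i k hik
    have hpos : (1:ℝ) ≤ (X * X) i k := by
      rw [Matrix.mul_apply]
      calc (1:ℝ) ≤ X i j * X j k := by nlinarith
        _ ≤ ∑ m, X i m * X m k :=
          Finset.single_le_sum (fun m _ => mul_nonneg (hnn i m) (hnn m k))
            (Finset.mem_univ j)
    linarith
  · intro htrans X hX
    obtain ⟨hXsymm, hXsupp⟩ := aux_span_le R hsymm X hX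
    refine aux_mem_span R hsymm _ (fun a b => ?_) (fun a b hab => ?_)
    · rw [Matrix.mul_apply, Matrix.mul_apply]
      exact Finset.sum_congr rfl fun m _ => by rw [hXsymm a m, hXsymm m b, mul_comm]
    · rw [Matrix.mul_apply]
      refine Finset.sum_eq_zero fun m _ => ?_
      by_cases h1 : R a m
      · have h2 : ¬ R m b := fun h2 => hab (htrans _ _ _ h1 h2)
        rw [hXsupp m b h2, mul_zero]
      · rw [hXsupp a m h1, zero_mul]
end

section
/- Let B be an orthogonal basis of Sⁿ and T : Sⁿ → Sⁿ a self-adjoint linear map. Form the graph G on vertex set B with an edge {A,B} whenever ⟨A, T(B)⟩ ≠ 0, and let B₁, …, B_p be the vertex sets of the connected components of G. For a subset P ⊆ B, the span of P is an invariant subspace of T if and only if P is a union of some of the sets B_k. -/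
open Matrix

private lemma trace_self_ne {n : ℕ} {A : Matrix (Fin n) (Fin n) ℝ} (hA : A.IsSymm)
    (h : A ≠ 0) : (A * A).trace ≠ 0 := by
  have hs : ∀ x y, A x y = A y x := fun x y => by
    conv_lhs => rw [← hA, Matrix.transpose_apply]
  have h1 : (A * A).trace = ∑ j, ∑ k, (A k j) ^ 2 := by
    simp only [Matrix.trace, Matrix.mul_apply, Matrix.diag_apply, sq]
    exact Finset.sum_congr rfl fun x _ => Finset.sum_congr rfl fun y _ => by rw [hs x y]
  rw [h1]
  obtain ⟨k, j, hkj⟩ : ∃ k j, A k j ≠ 0 := by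
    by_contra hc; push_neg at hc
    exact h (Matrix.ext fun k j => hc k j)
  have hpos : 0 < ∑ j, ∑ k, (A k j) ^ 2 :=
    Finset.sum_pos' (fun i _ => Finset.sum_nonneg fun _ _ => sq_nonneg _)
      ⟨j, Finset.mem_univ _, Finset.sum_pos' (fun i _ => sq_nonneg _)
        ⟨k, Finset.mem_univ _, by positivity⟩⟩
  linarith

/-- Let `B` be an orthogonal basis of the symmetric matrices and `T` a self-adjoint
linear map (w.r.t. the trace inner product). Form the graph on the basis with an edge
`{Bᵢ, Bⱼ}` whenever `⟨Bᵢ, T Bⱼ⟩ ≠ 0`. Then for `P ⊆ ι`, the span of `{Bᵢ : i ∈ P}` is an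
invariant subspace of `T` iff `P` is a union of connected components of the graph, i.e.
`P` is closed under reachability. -/
theorem stmt16 {n : ℕ} {ι : Type*} [Fintype ι] [DecidableEq ι]
    (B : ι → Matrix (Fin n) (Fin n) ℝ)
    (hBsym : ∀ i, (B i).IsSymm) (hBne : ∀ i, B i ≠ 0)
    (horth : ∀ i j, i ≠ j → (B i * B j).trace = 0)
    (hspan : ∀ A : Matrix (Fin n) (Fin n) ℝ, A.IsSymm →
      A ∈ Submodule.span ℝ (Set.range B))
    (T : Matrix (Fin n) (Fin n) ℝ →ₗ[ℝ] Matrix (Fin n) (Fin n) ℝ)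
    (hTsym : ∀ A : Matrix (Fin n) (Fin n) ℝ, A.IsSymm → (T A).IsSymm)
    (hsa : ∀ A C : Matrix (Fin n) (Fin n) ℝ, A.IsSymm → C.IsSymm →
      (T A * C).trace = (A * T C).trace)
    (P : Set ι) :
    (∀ A ∈ Submodule.span ℝ (B '' P), T A ∈ Submodule.span ℝ (B '' P)) ↔
      ∀ i ∈ P, ∀ j,
        (SimpleGraph.fromRel fun a b => (B a * T (B b)).trace ≠ 0).Reachable i j →
          j ∈ P := by
  set G := SimpleGraph.fromRel fun a b => (B a * T (B b)).trace ≠ 0 with hG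
  -- symmetry of the coefficients
  have hc : ∀ i j, (B i * T (B j)).trace = (B j * T (B i)).trace := by
    intro i j
    rw [← hsa (B i) (B j) (hBsym i) (hBsym j), Matrix.trace_mul_comm]
  -- orthogonality: if j ∉ P then trace (B j * X) = 0 for X in span
  have horthspan : ∀ j ∉ P, ∀ X ∈ Submodule.span ℝ (B '' P), (B j * X).trace = 0 := by
    intro j hj X hX
    induction hX using Submodule.span_induction with
    | mem x hx =>
        obtain ⟨k, hk, rfl⟩ := hx
        exact horth j k (fun h => hj (h ▸ hk))
    | zero => simp
    | add x y _ _ hx hy => rw [mul_add, Matrix.trace_add, hx, hy, add_zero]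
    | smul a x _ hx => rw [Matrix.mul_smul, Matrix.trace_smul, hx, smul_zero]
  -- if X ∈ span (range B) and trace (B j * X) = 0 for all j ∉ P then X ∈ span (B '' P)
  have hmem : ∀ X ∈ Submodule.span ℝ (Set.range B),
      (∀ j ∉ P, (B j * X).trace = 0) → X ∈ Submodule.span ℝ (B '' P) := by
    intro X hX h0
    rw [Submodule.mem_span_range_iff_exists_fun ℝ] at hX
    obtain ⟨a, rfl⟩ := hX
    have key : ∀ j ∉ P, a j = 0 := by
      intro j hj
      have := h0 j hj
      rw [Finset.mul_sum, Matrix.trace_sum] at this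
      have hsum : ∀ i ∈ Finset.univ, i ≠ j → (B j * a i • B i).trace = 0 := by
        intro i _ hij
        rw [Matrix.mul_smul, Matrix.trace_smul, horth j i (Ne.symm hij), smul_zero]
      rw [Finset.sum_eq_single j hsum (by simp)] at this
      rw [Matrix.mul_smul, Matrix.trace_smul, smul_eq_mul] at this
      exact (mul_eq_zero.mp this).resolve_right (trace_self_ne (hBsym j) (hBne j))
    refine Submodule.sum_mem _ fun i _ => ?_
    by_cases hi : i ∈ P
    · exact Submodule.smul_mem _ _ (Submodule.subset_span ⟨i, hi, rfl⟩)
    · rw [key i hi, zero_smul]; exact Submodule.zero_mem _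
  constructor
  · intro hinv i hi j hij
    -- adjacency step
    have step : ∀ k ∈ P, ∀ l, G.Adj k l → l ∈ P := by
      intro k hk l hadj
      rw [hG, SimpleGraph.fromRel_adj] at hadj
      obtain ⟨hne, hor⟩ := hadj
      by_contra hl
      have hTB : T (B k) ∈ Submodule.span ℝ (B '' P) :=
        hinv _ (Submodule.subset_span ⟨k, hk, rfl⟩)
      have h1 : (B l * T (B k)).trace = 0 := horthspan l hl _ hTB
      have h2 : (B k * T (B l)).trace = 0 := (hc k l).trans h1
      rcases hor with h | h
      · exact h h2
      · exact h h1
    -- induct along a walk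
    have walkstep : ∀ k l, G.Walk k l → k ∈ P → l ∈ P := by
      intro k l w
      induction w with
      | nil => exact id
      | cons h p ih => exact fun hk => ih (step _ hk _ h)
    exact walkstep i j hij.some hi
  · intro hclosed A hA
    -- reduce to generators
    induction hA using Submodule.span_induction with
    | mem x hx =>
        obtain ⟨i, hi, rfl⟩ := hx
        refine hmem _ (hspan _ (hTsym _ (hBsym i))) ?_
        intro j hj
        by_contra hne
        have hij : i ≠ j := fun h => hj (h ▸ hi)
        have hadj : G.Adj i j := by
          rw [hG, SimpleGraph.fromRel_adj]
          exact ⟨hij, Or.inr hne⟩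
        exact hj (hclosed i hi j hadj.reachable)
    | zero => simp
    | add x y _ _ hx hy => rw [map_add]; exact Submodule.add_mem _ hx hy
    | smul a x _ hx => rw [_root_.map_smul]; exact Submodule.smul_mem _ _ hx
end

section
/- Let P be a partition of [n] × [n] with symmetric characteristic matrices B_P, and let S : Sⁿ → Sⁿ be a self-adjoint linear map. Then the span of B_P is an invariant subspace of S if and only if for all X, Y ∈ B_P, the Schur (entrywise) product S(X) ∘ Y is a scalar multiple of Y. -/
open Matrix

/-- The 0/1 characteristic matrix of the class `i` of the partition of `[n] × [n]` given
by the fibers of `c`. -/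
def charMatrix {n : ℕ} {ι : Type*} [DecidableEq ι]
    (c : Fin n × Fin n → ι) (i : ι) : Matrix (Fin n) (Fin n) ℝ :=
  Matrix.of fun a b => if c (a, b) = i then (1 : ℝ) else 0

lemma span_const {n : ℕ} {ι : Type*} [DecidableEq ι] (c : Fin n × Fin n → ι)
    {A : Matrix (Fin n) (Fin n) ℝ}
    (hA : A ∈ Submodule.span ℝ (Set.range (charMatrix c)))
    {a b a' b' : Fin n} (h : c (a, b) = c (a', b')) : A a b = A a' b' := by
  induction hA using Submodule.span_induction with
  | mem x hx => obtain ⟨i, rfl⟩ := hx; simp [charMatrix, h]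
  | zero => simp
  | add x y _ _ hx hy => simp [Matrix.add_apply, hx, hy]
  | smul r x _ hx => simp [Matrix.smul_apply, hx]

/-- For a partition of `[n] × [n]` with symmetric characteristic matrices and a
self-adjoint linear map `S` on symmetric matrices, the span of the characteristic
matrices is an invariant subspace of `S` iff for all characteristic matrices `X, Y`, the
Schur product `S(X) ∘ Y` is a scalar multiple of `Y`. -/
theorem stmt17 {n : ℕ} {ι : Type*} [DecidableEq ι]
    (c : Fin n × Fin n → ι)
    (hc : ∀ a b : Fin n, c (a, b) = c (b, a))
    (S : Matrix (Fin n) (Fin n) ℝ →ₗ[ℝ] Matrix (Fin n) (Fin n) ℝ)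
    (hsa : ∀ A B : Matrix (Fin n) (Fin n) ℝ, A.IsSymm → B.IsSymm →
      (S A * B).trace = (A * S B).trace) :
    (∀ A ∈ Submodule.span ℝ (Set.range (charMatrix c)),
        S A ∈ Submodule.span ℝ (Set.range (charMatrix c))) ↔
      ∀ i j : ι, ∃ μ : ℝ,
        (Matrix.of fun a b => S (charMatrix c i) a b * charMatrix c j a b) =
          μ • charMatrix c j := by
  constructor
  · intro hinv i j
    have hi := hinv _ (Submodule.subset_span ⟨i, rfl⟩)
    by_cases hj : ∃ p : Fin n × Fin n, c p = j
    · obtain ⟨⟨a0, b0⟩, h0⟩ := hj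
      refine ⟨S (charMatrix c i) a0 b0, ?_⟩
      ext a b
      by_cases h : c (a, b) = j
      · have e1 : charMatrix c j a b = 1 := by simp [charMatrix, h]
        have := span_const c hi (h.trans h0.symm)
        simp only [Matrix.of_apply, Matrix.smul_apply, smul_eq_mul, e1, mul_one]
        exact this
      · have e0 : charMatrix c j a b = 0 := by simp [charMatrix, h]
        simp only [Matrix.of_apply, Matrix.smul_apply, smul_eq_mul, e0, mul_zero]
    · refine ⟨0, ?_⟩
      ext a b
      have hne : c (a, b) ≠ j := fun h => hj ⟨(a, b), h⟩
      simp [charMatrix, hne]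
  · intro h A hA
    induction hA using Submodule.span_induction with
    | mem x hx =>
      obtain ⟨i, rfl⟩ := hx
      set μ : ι → ℝ := fun j => (h i j).choose with hμ
      have key : ∀ a b : Fin n, S (charMatrix c i) a b = μ (c (a, b)) := by
        intro a b
        have hspec := (h i (c (a, b))).choose_spec
        have := congrFun (congrFun hspec a) b
        have h1 : charMatrix c (c (a, b)) a b = 1 := by simp [charMatrix]
        simp only [Matrix.of_apply, Matrix.smul_apply, smul_eq_mul, h1, mul_one] at this
        exact this
      have hsum : S (charMatrix c i) =
          ∑ j ∈ Finset.image c Finset.univ, μ j • charMatrix c j := by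
        ext a b
        rw [key a b]
        rw [Matrix.sum_apply]
        simp only [Matrix.smul_apply, charMatrix, Matrix.of_apply, smul_eq_mul]
        rw [Finset.sum_congr rfl (fun j _ => by rw [mul_ite, mul_one, mul_zero])]
        rw [Finset.sum_ite_eq (Finset.image c Finset.univ) (c (a, b)) μ]
        simp
      rw [hsum]
      exact Submodule.sum_mem _ fun j _ =>
        Submodule.smul_mem _ _ (Submodule.subset_span ⟨j, rfl⟩)
    | zero => simp
    | add x y _ _ hx hy => rw [map_add]; exact Submodule.add_mem _ hx hy
    | smul r x _ hx => rw [S.map_smul]; exact Submodule.smul_mem _ _ hx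
end
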